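/- arXiv:math/0009137 — 3 statements merged into one kernel-verified Lean document; each statement's English description precedes it below -/
import Mathlib

section
/- Let d ≥ 2, B > 0, and let K ⊆ ℝ^d be a convex body of constant width B. Then K is strictly convex: for all distinct x, y ∈ K and all t ∈ (0,1), the point t·x + (1−t)·y lies in the interior of K. -/
open MeasureTheory Real

/-- The support function of a set `K ⊆ ℝᵈ`: `h_K(u) = sup_{x ∈ K} ⟨x, u⟩`. -/
noncomputable def suppFn {d : ℕ} (K : Set (EuclideanSpace ℝ (Fin d)))
    (u : EuclideanSpace ℝ (Fin d)) : ℝ :=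
  sSup ((fun x => (inner ℝ x u : ℝ)) '' K)

/-- A convex body in ℝᵈ: compact, convex, with nonempty interior. -/
def IsConvexBody {d : ℕ} (K : Set (EuclideanSpace ℝ (Fin d))) : Prop :=
  IsCompact K ∧ Convex ℝ K ∧ (interior K).Nonempty

/-- `K` has constant width `B`: for every unit vector `u`,
`h_K(u) + h_K(-u) = B`. -/
def HasConstantWidth {d : ℕ} (K : Set (EuclideanSpace ℝ (Fin d))) (B : ℝ) : Prop :=
  ∀ u : EuclideanSpace ℝ (Fin d), ‖u‖ = 1 → suppFn K u + suppFn K (-u) = B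

lemma suppFn_bdd {d : ℕ} {K : Set (EuclideanSpace ℝ (Fin d))} (hc : IsCompact K)
    (v : EuclideanSpace ℝ (Fin d)) :
    BddAbove ((fun x => (inner ℝ x v : ℝ)) '' K) :=
  (hc.image (continuous_id.inner continuous_const)).bddAbove

lemma le_suppFn {d : ℕ} {K : Set (EuclideanSpace ℝ (Fin d))} (hc : IsCompact K)
    {x : EuclideanSpace ℝ (Fin d)} (hx : x ∈ K) (v : EuclideanSpace ℝ (Fin d)) :
    (inner ℝ x v : ℝ) ≤ suppFn K v :=
  le_csSup (suppFn_bdd hc v) ⟨x, hx, rfl⟩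

lemma exists_suppFn_eq {d : ℕ} {K : Set (EuclideanSpace ℝ (Fin d))} (hc : IsCompact K)
    (hne : K.Nonempty) (v : EuclideanSpace ℝ (Fin d)) :
    ∃ w ∈ K, suppFn K v = (inner ℝ w v : ℝ) := by
  obtain ⟨w, hwK, hmax⟩ := hc.exists_isMaxOn hne
    ((continuous_id.inner continuous_const).continuousOn
      (s := K) (f := fun x => (inner ℝ x v : ℝ)))
  refine ⟨w, hwK, le_antisymm ?_ (le_suppFn hc hwK v)⟩
  exact csSup_le (hne.image _) (by rintro r ⟨p, hp, rfl⟩; exact hmax hp)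

/-- the diameter bound: any difference of two points of K has norm ≤ B -/
lemma diff_norm_le {d : ℕ} {K : Set (EuclideanSpace ℝ (Fin d))} {B : ℝ} (hB : 0 < B)
    (hc : IsCompact K) (hw : HasConstantWidth K B)
    {p q : EuclideanSpace ℝ (Fin d)} (hp : p ∈ K) (hq : q ∈ K) : ‖p - q‖ ≤ B := by
  rcases eq_or_ne p q with rfl | hpq
  · simpa using hB.le
  · set v := p - q with hv
    have hv0 : v ≠ 0 := sub_ne_zero.2 hpq
    set e : EuclideanSpace ℝ (Fin d) := ‖v‖⁻¹ • v with he
    have hne : ‖e‖ = 1 := by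
      rw [he, norm_smul, norm_inv, norm_norm, inv_mul_cancel₀ (norm_ne_zero_iff.2 hv0)]
    have h1 : (inner ℝ v e : ℝ) = ‖v‖ := by
      rw [he, real_inner_smul_right, real_inner_self_eq_norm_sq, sq, ← mul_assoc,
        inv_mul_cancel₀ (norm_ne_zero_iff.2 hv0), one_mul]
    have h2 : (inner ℝ v e : ℝ) = (inner ℝ p e : ℝ) + (inner ℝ q (-e) : ℝ) := by
      rw [inner_neg_right, hv, inner_sub_left]; ring
    have h3 : (inner ℝ p e : ℝ) ≤ suppFn K e := le_suppFn hc hp e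
    have h4 : (inner ℝ q (-e) : ℝ) ≤ suppFn K (-e) := le_suppFn hc hq (-e)
    have h5 := hw e hne
    calc ‖v‖ = (inner ℝ p e : ℝ) + (inner ℝ q (-e) : ℝ) := by rw [← h2, h1]
      _ ≤ suppFn K e + suppFn K (-e) := add_le_add h3 h4
      _ = B := h5

/-- A convex body of constant width is strictly convex: every proper convex
combination of two distinct points of `K` lies in the interior of `K`. -/
theorem constant_width_strictly_convex (d : ℕ) (hd : 2 ≤ d) (B : ℝ) (hB : 0 < B)
    (K : Set (EuclideanSpace ℝ (Fin d)))
    (hK : IsConvexBody K) (hw : HasConstantWidth K B) :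
    ∀ x ∈ K, ∀ y ∈ K, x ≠ y → ∀ t : ℝ, 0 < t → t < 1 →
      t • x + (1 - t) • y ∈ interior K := by
  obtain ⟨hKc, hKconv, hKint⟩ := hK
  intro x hx y hy hxy t ht ht1
  by_contra hz
  set z := t • x + (1 - t) • y with hzdef
  have hzK : z ∈ K := hKconv hx hy ht.le (by linarith) (by ring)
  -- separating functional at z
  obtain ⟨f, hf⟩ := geometric_hahn_banach_open_point hKconv.interior isOpen_interior hz
  obtain ⟨a, ha⟩ := hKint
  -- f p ≤ f z for all p ∈ K
  have hfK : ∀ p ∈ K, f p ≤ f z := by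
    intro p hp
    by_contra hcon
    push_neg at hcon
    have haz : f a < f z := hf a ha
    have hd0 : 0 < f p - f a := by linarith
    set s : ℝ := (f p - f z) / (2 * (f p - f a)) with hs
    have hs0 : 0 < s := div_pos (by linarith) (by linarith)
    have hs1 : s < 1 := by
      rw [hs, div_lt_one (by linarith)]; linarith
    have hmem : s • a + (1 - s) • p ∈ interior K :=
      hKconv.combo_interior_self_mem_interior ha hp hs0 (by linarith) (by ring)
    have := hf _ hmem
    simp only [map_add, ContinuousLinearMap.map_smul, smul_eq_mul] at this
    have hss : s * (f p - f a) = (f p - f z) / 2 := by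
      rw [hs]; field_simp
    nlinarith
  -- convert f to an inner product with a vector u
  set u : EuclideanSpace ℝ (Fin d) := (InnerProductSpace.toDual ℝ _).symm f with hu
  have hinner : ∀ p : EuclideanSpace ℝ (Fin d), (inner ℝ p u : ℝ) = f p := by
    intro p
    rw [real_inner_comm]
    exact InnerProductSpace.toDual_symm_apply
  have hu0 : u ≠ 0 := by
    intro h
    have := hf a ha
    rw [← hinner a, ← hinner z, h] at this
    simp at this
  set e : EuclideanSpace ℝ (Fin d) := ‖u‖⁻¹ • u with he
  have hne : ‖e‖ = 1 := by
    rw [he, norm_smul, norm_inv, norm_norm, inv_mul_cancel₀ (norm_ne_zero_iff.2 hu0)]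
  set M : ℝ := (inner ℝ z e : ℝ) with hM
  have hle : ∀ p ∈ K, (inner ℝ p e : ℝ) ≤ M := by
    intro p hp
    rw [hM, he, real_inner_smul_right, real_inner_smul_right]
    have : (inner ℝ p u : ℝ) ≤ (inner ℝ z u : ℝ) := by
      rw [hinner, hinner]; exact hfK p hp
    exact mul_le_mul_of_nonneg_left this (inv_nonneg.2 (norm_nonneg u))
  -- x and y achieve the max M
  have hcomb : t * (inner ℝ x e : ℝ) + (1 - t) * (inner ℝ y e : ℝ) = M := by
    rw [hM, hzdef, inner_add_left, real_inner_smul_left, real_inner_smul_left]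
  have hxle := hle x hx
  have hyle := hle y hy
  have hxM : (inner ℝ x e : ℝ) = M := by nlinarith
  have hyM : (inner ℝ y e : ℝ) = M := by nlinarith
  -- suppFn K e = M
  have hsupp : suppFn K e = M := by
    refine le_antisymm (csSup_le (Set.Nonempty.image _ ⟨x, hx⟩) ?_)
      (le_csSup (suppFn_bdd hKc e) ⟨z, hzK, rfl⟩)
    rintro r ⟨p, hp, rfl⟩; exact hle p hp
  obtain ⟨w, hwK, hwsupp⟩ := exists_suppFn_eq hKc ⟨x, hx⟩ (-e)
  have hwidth := hw e hne
  -- x - w and y - w both equal B • e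
  have key : ∀ p : EuclideanSpace ℝ (Fin d), p ∈ K → (inner ℝ p e : ℝ) = M →
      p - w = B • e := by
    intro p hp hpM
    have hvB : (inner ℝ (p - w) e : ℝ) = B := by
      rw [inner_sub_left, hpM]
      have h6 : suppFn K (-e) = -(inner ℝ w e : ℝ) := by
        rw [hwsupp, inner_neg_right]
      linarith [hwidth, hsupp]
    have hnle : ‖p - w‖ ≤ B := diff_norm_le hB hKc hw hp hwK
    have hcs : (inner ℝ (p - w) e : ℝ) ≤ ‖p - w‖ * ‖e‖ := real_inner_le_norm _ _
    have hnB : ‖p - w‖ = B := by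
      rw [hne, mul_one] at hcs
      linarith [hvB ▸ hcs]
    have heq : (inner ℝ (p - w) e : ℝ) = ‖p - w‖ * ‖e‖ := by
      rw [hnB, hne, mul_one, hvB]
    have := inner_eq_norm_mul_iff_real.mp heq
    rw [hne, hnB, one_smul] at this
    rw [this]
  have h1 := key x hx hxM
  have h2 := key y hy hyM
  apply hxy
  have : x - w = y - w := by rw [h1, h2]
  linear_combination (norm := module) this
end

section
/- Let R : ℝ → ℝ be a continuous 2π-periodic function with ∫₀^{2π} R(θ) cos θ dθ = 0 and ∫₀^{2π} R(θ) sin θ dθ = 0. Then there exists a unique twice continuously differentiable 2π-periodic function p : ℝ → ℝ satisfying p'' + p = R together with ∫₀^{2π} p(θ) cos θ dθ = 0 and ∫₀^{2π} p(θ) sin θ dθ = 0. -/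
open MeasureTheory Real intervalIntegral

lemma aux_contDiff_two {p p1 p2 : ℝ → ℝ} (h1 : ∀ θ, HasDerivAt p (p1 θ) θ)
    (h2 : ∀ θ, HasDerivAt p1 (p2 θ) θ) (h3 : Continuous p2) : ContDiff ℝ 2 p := by
  have hdp : deriv p = p1 := funext fun θ => (h1 θ).deriv
  have hdp1 : deriv p1 = p2 := funext fun θ => (h2 θ).deriv
  rw [show (2 : WithTop ℕ∞) = 1 + 1 from rfl, contDiff_succ_iff_deriv]
  refine ⟨fun θ => (h1 θ).differentiableAt, by simp, ?_⟩
  rw [hdp, contDiff_one_iff_deriv, hdp1]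
  exact ⟨fun θ => (h2 θ).differentiableAt, h3⟩

lemma aux_harmonic_zero {e e' : ℝ → ℝ} (h1 : ∀ θ, HasDerivAt e (e' θ) θ)
    (h2 : ∀ θ, HasDerivAt e' (-(e θ)) θ) (h0 : e 0 = 0) (h0' : e' 0 = 0) :
    ∀ θ, e θ = 0 := by
  have hE : ∀ θ, HasDerivAt (fun t => e t ^ 2 + e' t ^ 2) 0 θ := by
    intro θ
    have := ((h1 θ).pow 2).add ((h2 θ).pow 2)
    refine this.congr_deriv (Eq.symm ?_)
    push_cast
    ring
  have hc : ∀ θ, e θ ^ 2 + e' θ ^ 2 = e 0 ^ 2 + e' 0 ^ 2 := fun θ =>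
    is_const_of_deriv_eq_zero (fun x => (hE x).differentiableAt)
      (fun x => (hE x).deriv) θ 0
  intro θ
  have := hc θ
  rw [h0, h0'] at this
  nlinarith [sq_nonneg (e θ), sq_nonneg (e' θ)]

lemma aux_trig_int :
    (∫ θ in (0:ℝ)..(2*π), Real.cos θ ^ 2) = π ∧
    (∫ θ in (0:ℝ)..(2*π), Real.sin θ ^ 2) = π ∧
    (∫ θ in (0:ℝ)..(2*π), Real.sin θ * Real.cos θ) = 0 := by
  rw [integral_cos_sq, integral_sin_sq, integral_sin_mul_cos₁]
  norm_num [Real.sin_two_pi, Real.cos_two_pi]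

lemma aux_unique {d : ℝ → ℝ} (hd : ContDiff ℝ 2 d)
    (hode : ∀ θ, deriv (deriv d) θ + d θ = 0)
    (hcos : ∫ θ in (0:ℝ)..(2*π), d θ * Real.cos θ = 0)
    (hsin : ∫ θ in (0:ℝ)..(2*π), d θ * Real.sin θ = 0) : ∀ θ, d θ = 0 := by
  have hd1 : Differentiable ℝ d := hd.differentiable (by norm_num)
  have hd' : ContDiff ℝ 1 (deriv d) := by
    rw [show (2 : WithTop ℕ∞) = 1 + 1 from rfl, contDiff_succ_iff_deriv] at hd
    exact hd.2.2
  have hd2 : Differentiable ℝ (deriv d) := hd'.differentiable one_ne_zero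
  set a := d 0 with ha
  set b := deriv d 0 with hb
  set e : ℝ → ℝ := fun θ => d θ - a * Real.cos θ - b * Real.sin θ with he
  set e' : ℝ → ℝ := fun θ => deriv d θ + a * Real.sin θ - b * Real.cos θ with he'
  have h1 : ∀ θ, HasDerivAt e (e' θ) θ := by
    intro θ
    have := (((hd1 θ).hasDerivAt).sub ((Real.hasDerivAt_cos θ).const_mul a)).sub
      ((Real.hasDerivAt_sin θ).const_mul b)
    refine this.congr_deriv (Eq.symm ?_)
    simp only [he']; ring
  have h2 : ∀ θ, HasDerivAt e' (-(e θ)) θ := by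
    intro θ
    have := (((hd2 θ).hasDerivAt).add ((Real.hasDerivAt_sin θ).const_mul a)).sub
      ((Real.hasDerivAt_cos θ).const_mul b)
    refine this.congr_deriv (Eq.symm ?_)
    have h := hode θ
    simp [he]
    linarith
  have hzero : ∀ θ, e θ = 0 :=
    aux_harmonic_zero h1 h2 (by simp [he, ha]) (by simp [he', hb])
  have hd_eq : ∀ θ, d θ = a * Real.cos θ + b * Real.sin θ := by
    intro θ
    have := hzero θ
    simp [he] at this
    linarith
  obtain ⟨hic, his, him⟩ := aux_trig_int
  have hkc : (∫ θ in (0:ℝ)..(2*π), d θ * Real.cos θ) = a * π := by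
    rw [integral_congr (g := fun θ => a * Real.cos θ ^ 2 + b * (Real.sin θ * Real.cos θ))
      (fun θ _ => by rw [hd_eq θ]; ring)]
    rw [integral_add (f := fun θ => a * Real.cos θ ^ 2) (g := fun θ => b * (Real.sin θ * Real.cos θ))
      ((continuous_const.mul (Real.continuous_cos.pow 2)).intervalIntegrable _ _)
      ((continuous_const.mul (Real.continuous_sin.mul Real.continuous_cos)).intervalIntegrable _ _),
      intervalIntegral.integral_const_mul, intervalIntegral.integral_const_mul, hic, him]
    ring
  have hks : (∫ θ in (0:ℝ)..(2*π), d θ * Real.sin θ) = b * π := by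
    rw [integral_congr (g := fun θ => b * Real.sin θ ^ 2 + a * (Real.sin θ * Real.cos θ))
      (fun θ _ => by rw [hd_eq θ]; ring)]
    rw [integral_add (f := fun θ => b * Real.sin θ ^ 2) (g := fun θ => a * (Real.sin θ * Real.cos θ))
      ((continuous_const.mul (Real.continuous_sin.pow 2)).intervalIntegrable _ _)
      ((continuous_const.mul (Real.continuous_sin.mul Real.continuous_cos)).intervalIntegrable _ _),
      intervalIntegral.integral_const_mul, intervalIntegral.integral_const_mul, his, him]
    ring
  rw [hcos] at hkc
  rw [hsin] at hks
  have hapi : a = 0 := by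
    have := Real.pi_ne_zero
    field_simp at hkc
    exact (mul_eq_zero.mp hkc.symm).resolve_right this
  have hbpi : b = 0 := by
    have := Real.pi_ne_zero
    field_simp at hks
    exact (mul_eq_zero.mp hks.symm).resolve_right this
  intro θ
  rw [hd_eq θ, hapi, hbpi]
  ring

/-- Fredholm-alternative solvability of `p'' + p = R` on the circle: if `R` is
continuous, `2π`-periodic, and orthogonal to `cos` and `sin`, then there is a
unique `C²`, `2π`-periodic solution `p` of `p'' + p = R` which is itself
orthogonal to `cos` and `sin`. -/
theorem fredholm_solvability (R : ℝ → ℝ) (hRc : Continuous R)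
    (hRper : Function.Periodic R (2 * π))
    (hRcos : ∫ θ in (0 : ℝ)..(2 * π), R θ * Real.cos θ = 0)
    (hRsin : ∫ θ in (0 : ℝ)..(2 * π), R θ * Real.sin θ = 0) :
    ∃! p : ℝ → ℝ,
      ContDiff ℝ 2 p ∧ Function.Periodic p (2 * π) ∧
      (∀ θ : ℝ, deriv (deriv p) θ + p θ = R θ) ∧
      (∫ θ in (0 : ℝ)..(2 * π), p θ * Real.cos θ = 0) ∧
      (∫ θ in (0 : ℝ)..(2 * π), p θ * Real.sin θ = 0) := by
  set f : ℝ → ℝ := fun t => R t * Real.cos t with hf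
  set g : ℝ → ℝ := fun t => R t * Real.sin t with hg
  have hfc : Continuous f := hRc.mul Real.continuous_cos
  have hgc : Continuous g := hRc.mul Real.continuous_sin
  set F : ℝ → ℝ := fun θ => ∫ t in (0:ℝ)..θ, f t with hFdef
  set G : ℝ → ℝ := fun θ => ∫ t in (0:ℝ)..θ, g t with hGdef
  have hF : ∀ θ, HasDerivAt F (f θ) θ := fun θ =>
    intervalIntegral.integral_hasDerivAt_right (hfc.intervalIntegrable _ _)
      (hfc.stronglyMeasurableAtFilter _ _) hfc.continuousAt
  have hG : ∀ θ, HasDerivAt G (g θ) θ := fun θ =>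
    intervalIntegral.integral_hasDerivAt_right (hgc.intervalIntegrable _ _)
      (hgc.stronglyMeasurableAtFilter _ _) hgc.continuousAt
  have hFc : Continuous F := by
    rw [continuous_iff_continuousAt]; exact fun θ => (hF θ).continuousAt
  have hGc : Continuous G := by
    rw [continuous_iff_continuousAt]; exact fun θ => (hG θ).continuousAt
  -- periodicity of F and G
  have hfper : Function.Periodic f (2 * π) := hRper.mul Real.cos_periodic
  have hgper : Function.Periodic g (2 * π) := hRper.mul Real.sin_periodic
  have hFper : ∀ θ, F (θ + 2 * π) = F θ := by
    intro θ
    have h1 : (∫ t in θ..(θ + 2*π), f t) = ∫ t in (0:ℝ)..(0 + 2*π), f t :=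
      hfper.intervalIntegral_add_eq θ 0
    have h2 : F θ + (∫ t in θ..(θ + 2*π), f t) = F (θ + 2*π) :=
      integral_add_adjacent_intervals (hfc.intervalIntegrable _ _) (hfc.intervalIntegrable _ _)
    rw [h1, zero_add] at h2
    rw [← h2, hRcos, add_zero]
  have hGper : ∀ θ, G (θ + 2 * π) = G θ := by
    intro θ
    have h1 : (∫ t in θ..(θ + 2*π), g t) = ∫ t in (0:ℝ)..(0 + 2*π), g t :=
      hgper.intervalIntegral_add_eq θ 0
    have h2 : G θ + (∫ t in θ..(θ + 2*π), g t) = G (θ + 2*π) :=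
      integral_add_adjacent_intervals (hgc.intervalIntegrable _ _) (hgc.intervalIntegrable _ _)
    rw [h1, zero_add] at h2
    rw [← h2, hRsin, add_zero]
  -- the particular solution p₀ and its derivatives
  set p₀ : ℝ → ℝ := fun θ => Real.sin θ * F θ - Real.cos θ * G θ with hp₀def
  set q₀ : ℝ → ℝ := fun θ => Real.cos θ * F θ + Real.sin θ * G θ with hq₀def
  have hp₀ : ∀ θ, HasDerivAt p₀ (q₀ θ) θ := by
    intro θ
    have := ((Real.hasDerivAt_sin θ).mul (hF θ)).sub ((Real.hasDerivAt_cos θ).mul (hG θ))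
    refine this.congr_deriv (Eq.symm ?_)
    simp only [hq₀def, hf, hg]
    ring
  have hq₀ : ∀ θ, HasDerivAt q₀ (R θ - p₀ θ) θ := by
    intro θ
    have := ((Real.hasDerivAt_cos θ).mul (hF θ)).add ((Real.hasDerivAt_sin θ).mul (hG θ))
    refine this.congr_deriv (Eq.symm ?_)
    simp only [hp₀def, hf, hg]
    linear_combination (-(R θ)) * (Real.sin_sq_add_cos_sq θ)
  have hp₀c : Continuous p₀ := (Real.continuous_sin.mul hFc).sub (Real.continuous_cos.mul hGc)
  -- adjust by the kernel to achieve orthogonality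
  set A : ℝ := -(∫ θ in (0:ℝ)..(2*π), p₀ θ * Real.cos θ) / π with hA
  set B : ℝ := -(∫ θ in (0:ℝ)..(2*π), p₀ θ * Real.sin θ) / π with hB
  set p : ℝ → ℝ := fun θ => p₀ θ + A * Real.cos θ + B * Real.sin θ with hpdef
  set p1 : ℝ → ℝ := fun θ => q₀ θ - A * Real.sin θ + B * Real.cos θ with hp1def
  have hp1 : ∀ θ, HasDerivAt p (p1 θ) θ := by
    intro θ
    have := ((hp₀ θ).add ((Real.hasDerivAt_cos θ).const_mul A)).add
      ((Real.hasDerivAt_sin θ).const_mul B)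
    refine this.congr_deriv (Eq.symm ?_)
    simp only [hp1def]
    ring
  have hp2 : ∀ θ, HasDerivAt p1 (R θ - p θ) θ := by
    intro θ
    have := ((hq₀ θ).sub ((Real.hasDerivAt_sin θ).const_mul A)).add
      ((Real.hasDerivAt_cos θ).const_mul B)
    refine this.congr_deriv (Eq.symm ?_)
    simp only [hpdef]
    ring
  have hpc : Continuous p := (hp₀c.add (continuous_const.mul Real.continuous_cos)).add
    (continuous_const.mul Real.continuous_sin)
  have hpcd : ContDiff ℝ 2 p := aux_contDiff_two hp1 hp2 (hRc.sub hpc)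
  have hdp : deriv p = p1 := funext fun θ => (hp1 θ).deriv
  have hode : ∀ θ, deriv (deriv p) θ + p θ = R θ := by
    intro θ
    rw [hdp, (hp2 θ).deriv]
    ring
  have hpper : Function.Periodic p (2 * π) := by
    intro θ
    simp only [hpdef, hp₀def]
    rw [hFper θ, hGper θ, Real.sin_periodic θ, Real.cos_periodic θ]
  obtain ⟨hic, his, him⟩ := aux_trig_int
  have hpcos : (∫ θ in (0:ℝ)..(2*π), p θ * Real.cos θ) = 0 := by
    rw [integral_congr (g := fun θ => p₀ θ * Real.cos θ + A * Real.cos θ ^ 2 +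
        B * (Real.sin θ * Real.cos θ)) (fun θ _ => by simp only [hpdef]; ring)]
    rw [integral_add (f := fun θ => p₀ θ * Real.cos θ + A * Real.cos θ ^ 2)
        (g := fun θ => B * (Real.sin θ * Real.cos θ)) (((hp₀c.mul Real.continuous_cos).add
        ((continuous_const.mul (Real.continuous_cos.pow 2)))).intervalIntegrable _ _)
      ((continuous_const.mul (Real.continuous_sin.mul Real.continuous_cos)).intervalIntegrable _ _),
      integral_add (f := fun θ => p₀ θ * Real.cos θ) (g := fun θ => A * Real.cos θ ^ 2)
        ((hp₀c.mul Real.continuous_cos).intervalIntegrable _ _)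
        ((continuous_const.mul (Real.continuous_cos.pow 2)).intervalIntegrable _ _),
      intervalIntegral.integral_const_mul, intervalIntegral.integral_const_mul, hic, him, hA]
    have := Real.pi_ne_zero
    field_simp
    ring
  have hpsin : (∫ θ in (0:ℝ)..(2*π), p θ * Real.sin θ) = 0 := by
    rw [integral_congr (g := fun θ => p₀ θ * Real.sin θ + B * Real.sin θ ^ 2 +
        A * (Real.sin θ * Real.cos θ)) (fun θ _ => by simp only [hpdef]; ring)]
    rw [integral_add (f := fun θ => p₀ θ * Real.sin θ + B * Real.sin θ ^ 2)
        (g := fun θ => A * (Real.sin θ * Real.cos θ)) (((hp₀c.mul Real.continuous_sin).add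
        ((continuous_const.mul (Real.continuous_sin.pow 2)))).intervalIntegrable _ _)
      ((continuous_const.mul (Real.continuous_sin.mul Real.continuous_cos)).intervalIntegrable _ _),
      integral_add (f := fun θ => p₀ θ * Real.sin θ) (g := fun θ => B * Real.sin θ ^ 2)
        ((hp₀c.mul Real.continuous_sin).intervalIntegrable _ _)
        ((continuous_const.mul (Real.continuous_sin.pow 2)).intervalIntegrable _ _),
      intervalIntegral.integral_const_mul, intervalIntegral.integral_const_mul, his, him, hB]
    have := Real.pi_ne_zero
    field_simp
    ring
  refine ⟨p, ⟨hpcd, hpper, hode, hpcos, hpsin⟩, ?_⟩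
  rintro q ⟨hqcd, hqper, hqode, hqcos, hqsin⟩
  -- uniqueness
  have hq1 : Differentiable ℝ q := hqcd.differentiable (by norm_num)
  have hp1' : Differentiable ℝ p := hpcd.differentiable (by norm_num)
  have hq2 : Differentiable ℝ (deriv q) := by
    rw [show (2 : WithTop ℕ∞) = 1 + 1 from rfl, contDiff_succ_iff_deriv] at hqcd
    exact hqcd.2.2.differentiable one_ne_zero
  have hp2' : Differentiable ℝ (deriv p) := by
    have := hpcd
    rw [show (2 : WithTop ℕ∞) = 1 + 1 from rfl, contDiff_succ_iff_deriv] at this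
    exact this.2.2.differentiable one_ne_zero
  set d : ℝ → ℝ := fun θ => q θ - p θ with hd
  have hdcd : ContDiff ℝ 2 d := hqcd.sub hpcd
  have hdd : deriv d = fun θ => deriv q θ - deriv p θ :=
    funext fun θ => deriv_sub (hq1 θ) (hp1' θ)
  have hddd : ∀ θ, deriv (deriv d) θ = deriv (deriv q) θ - deriv (deriv p) θ := by
    intro θ
    rw [hdd]
    exact deriv_sub (hq2 θ) (hp2' θ)
  have hdode : ∀ θ, deriv (deriv d) θ + d θ = 0 := by
    intro θ
    rw [hddd θ]
    have h1 := hqode θ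
    have h2 := hode θ
    simp only [hd]
    linarith
  have hqc : Continuous q := hqcd.continuous
  have hdcos : (∫ θ in (0:ℝ)..(2*π), d θ * Real.cos θ) = 0 := by
    rw [integral_congr (g := fun θ => q θ * Real.cos θ - p θ * Real.cos θ)
      (fun θ _ => by simp only [hd]; ring)]
    rw [integral_sub (f := fun θ => q θ * Real.cos θ) (g := fun θ => p θ * Real.cos θ)
      ((hqc.mul Real.continuous_cos).intervalIntegrable _ _)
      ((hpc.mul Real.continuous_cos).intervalIntegrable _ _), hqcos, hpcos]
    ring
  have hdsin : (∫ θ in (0:ℝ)..(2*π), d θ * Real.sin θ) = 0 := by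
    rw [integral_congr (g := fun θ => q θ * Real.sin θ - p θ * Real.sin θ)
      (fun θ _ => by simp only [hd]; ring)]
    rw [integral_sub (f := fun θ => q θ * Real.sin θ) (g := fun θ => p θ * Real.sin θ)
      ((hqc.mul Real.continuous_sin).intervalIntegrable _ _)
      ((hpc.mul Real.continuous_sin).intervalIntegrable _ _), hqsin, hpsin]
    ring
  have hzero := aux_unique hdcd hdode hdcos hdsin
  funext θ
  have := hzero θ
  simp only [hd] at this
  linarith
end

section
/- For all real numbers s, t with 3 ≤ s < t, one has t·tan(π/(2t)) < s·tan(π/(2s)); equivalently, the quantity π − n·tan(π/(2n)) is strictly increasing in n on [3, ∞). Consequently, for odd integers 3 ≤ m < n and any B > 0, (B²/2)·(π − m·tan(π/(2m))) < (B²/2)·(π − n·tan(π/(2n))). -/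
open Real

lemma tan_div_strictMonoOn : StrictMonoOn (fun x : ℝ => tan x / x) (Set.Ioo 0 (π/2)) := by
  have hderiv : ∀ x ∈ Set.Ioo (0:ℝ) (π/2),
      HasDerivAt (fun x : ℝ => tan x / x) ((1 / cos x ^ 2 * x - tan x * 1) / x ^ 2) x := by
    intro x hx
    have hc : cos x ≠ 0 := by
      have := Real.cos_pos_of_mem_Ioo ⟨by linarith [hx.1, pi_pos], hx.2⟩
      linarith
    exact (Real.hasDerivAt_tan hc).div (hasDerivAt_id x) (ne_of_gt hx.1)
  apply strictMonoOn_of_deriv_pos (convex_Ioo _ _)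
  · exact fun x hx => ((hderiv x hx).continuousAt).continuousWithinAt
  · intro x hx
    rw [interior_Ioo] at hx
    rw [(hderiv x hx).deriv]
    have hc : 0 < cos x := Real.cos_pos_of_mem_Ioo ⟨by linarith [hx.1, pi_pos], hx.2⟩
    have hs : 0 < sin x := Real.sin_pos_of_pos_of_lt_pi hx.1 (by linarith [pi_pos, hx.2])
    have hsx : sin x < x := Real.sin_lt hx.1
    have hc1 : cos x ≤ 1 := Real.cos_le_one x
    have hnum : 1 / cos x ^ 2 * x - tan x * 1 = (x - sin x * cos x) / cos x ^ 2 := by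
      rw [Real.tan_eq_sin_div_cos]
      field_simp
    rw [hnum]
    exact div_pos (div_pos (by nlinarith) (pow_pos hc 2)) (pow_pos hx.1 2)

lemma key : ∀ s t : ℝ, 3 ≤ s → s < t → t * tan (π / (2 * t)) < s * tan (π / (2 * s)) := by
  intro s t hs hst
  have hs0 : (0:ℝ) < s := by linarith
  have ht0 : (0:ℝ) < t := by linarith
  have hπ := pi_pos
  have hxs : π / (2 * s) ∈ Set.Ioo (0:ℝ) (π/2) := by
    constructor
    · positivity
    · rw [div_lt_div_iff₀ (by linarith) (by norm_num)]
      nlinarith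
  have hxt : π / (2 * t) ∈ Set.Ioo (0:ℝ) (π/2) := by
    constructor
    · positivity
    · rw [div_lt_div_iff₀ (by linarith) (by norm_num)]
      nlinarith
  have hlt : π / (2 * t) < π / (2 * s) := by
    apply div_lt_div_of_pos_left hπ (by linarith) (by linarith)
  have := tan_div_strictMonoOn hxt hxs hlt
  simp only at this
  have h1 : tan (π / (2 * t)) / (π / (2 * t)) = t * tan (π / (2 * t)) * (2 / π) := by
    field_simp
  have h2 : tan (π / (2 * s)) / (π / (2 * s)) = s * tan (π / (2 * s)) * (2 / π) := by
    field_simp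
  rw [h1, h2] at this
  have h2π : (0:ℝ) < 2 / π := by positivity
  exact lt_of_mul_lt_mul_right this (le_of_lt h2π)

/-- The function `t ↦ t·tan(π/(2t))` is strictly decreasing on `[3, ∞)`;
equivalently `π − n·tan(π/(2n))` is strictly increasing there. Consequently the
area `(B²/2)·(π − n·tan(π/(2n)))` of a Reuleaux polygon of width `B` with `n`
sides is strictly increasing in the (odd) number of sides `n`, so the Reuleaux
triangle has the smallest area among Reuleaux polygons of width `B`. -/
theorem reuleaux_polygon_area_increasing :
    (∀ s t : ℝ, 3 ≤ s → s < t → t * tan (π / (2 * t)) < s * tan (π / (2 * s))) ∧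
      ∀ m n : ℕ, Odd m → Odd n → 3 ≤ m → m < n → ∀ B : ℝ, 0 < B →
        B ^ 2 / 2 * (π - (m : ℝ) * tan (π / (2 * m))) <
          B ^ 2 / 2 * (π - (n : ℝ) * tan (π / (2 * n))) := by
  refine ⟨key, ?_⟩
  intro m n _ _ hm hmn B hB
  have h := key m n (by exact_mod_cast hm) (by exact_mod_cast hmn)
  have hB2 : (0:ℝ) < B ^ 2 / 2 := by positivity
  apply mul_lt_mul_of_pos_left _ hB2
  linarith
end
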